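/- If f : [0,A] → ℝ is continuous, differentiable on (0,A), and its derivative f' is convex on (0,A), then f has positive differences of order 3: for all x,y,z,t ≥ 0 with x+y+z+t ≤ A, f(x+t) + f(y+t) + f(z+t) + f(x+y+z+t) ≥ f(x+y+t) + f(y+z+t) + f(z+x+t) + f(t). -/

import Mathlib

/-- Second differences of a convex function are nonnegative. -/
lemma conv2 {S : Set ℝ} {g : ℝ → ℝ} (hg : ConvexOn ℝ S g) (s a b : ℝ)
    (ha : 0 ≤ a) (hb : 0 ≤ b) (h1 : s ∈ S) (h2 : a + b + s ∈ S) :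
    g (a + s) + g (b + s) ≤ g s + g (a + b + s) := by
  rcases eq_or_lt_of_le (by linarith : (0:ℝ) ≤ a + b) with hc | hc
  · have ha0 : a = 0 := by linarith
    have hb0 : b = 0 := by linarith
    simp [ha0, hb0]
  · have hcne : a + b ≠ 0 := ne_of_gt hc
    have h3 : g (a + s) ≤ (b / (a + b)) * g s + (a / (a + b)) * g (a + b + s) := by
      have := hg.2 h1 h2 (by positivity : (0:ℝ) ≤ b / (a + b))
        (by positivity : (0:ℝ) ≤ a / (a + b)) (by field_simp; ring)
      simpa [smul_eq_mul, show (b / (a+b)) * s + (a / (a+b)) * (a + b + s) = a + s by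
        field_simp; ring] using this
    have h4 : g (b + s) ≤ (a / (a + b)) * g s + (b / (a + b)) * g (a + b + s) := by
      have := hg.2 h1 h2 (by positivity : (0:ℝ) ≤ a / (a + b))
        (by positivity : (0:ℝ) ≤ b / (a + b)) (by field_simp)
      simpa [smul_eq_mul, show (a / (a+b)) * s + (b / (a+b)) * (a + b + s) = b + s by
        field_simp; ring] using this
    have e : (b / (a+b)) * g s + (a / (a+b)) * g (a+b+s) +
        ((a / (a+b)) * g s + (b / (a+b)) * g (a+b+s)) = g s + g (a+b+s) := by
      field_simp; ring
    linarith [h3, h4, e]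

theorem stmt5 (A : ℝ) (hA : 0 < A) (f f' : ℝ → ℝ)
    (hcont : ContinuousOn f (Set.Icc 0 A))
    (hderiv : ∀ x ∈ Set.Ioo 0 A, HasDerivAt f (f' x) x)
    (hconv : ConvexOn ℝ (Set.Ioo 0 A) f') :
    ∀ x y z t : ℝ, 0 ≤ x → 0 ≤ y → 0 ≤ z → 0 ≤ t → x + y + z + t ≤ A →
      f (x + y + t) + f (y + z + t) + f (z + x + t) + f t ≤
        f (x + t) + f (y + t) + f (z + t) + f (x + y + z + t) := by
  intro x y z t hx hy hz ht hsum
  set D : ℝ → ℝ := fun s => f (x + y + s) + f s - f (x + s) - f (y + s) with hD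
  have hshift : ∀ c : ℝ, 0 ≤ c → c ≤ x + y →
      ContinuousOn (fun s => f (c + s)) (Set.Icc t (z + t)) := by
    intro c hc hcle
    apply hcont.comp (Continuous.continuousOn (by continuity))
    intro s hs
    simp only [Set.mem_Icc] at hs ⊢
    constructor <;> linarith [hs.1, hs.2]
  have hDcont : ContinuousOn D (Set.Icc t (z + t)) := by
    have h1 := hshift (x + y) (by linarith) le_rfl
    have h2 := hshift 0 le_rfl (by linarith)
    have h3 := hshift x hx (by linarith)
    have h4 := hshift y hy (by linarith)
    simp only [zero_add] at h2
    exact ((h1.add h2).sub h3).sub h4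
  have hDderiv : ∀ s ∈ Set.Ioo t (z + t),
      HasDerivAt D (f' (x + y + s) + f' s - f' (x + s) - f' (y + s)) s := by
    intro s hs
    obtain ⟨hs1, hs2⟩ := hs
    have key : ∀ c : ℝ, 0 ≤ c → c ≤ x + y →
        HasDerivAt (fun u => f (c + u)) (f' (c + s)) s := by
      intro c hc hcle
      have hmem : c + s ∈ Set.Ioo 0 A := ⟨by linarith, by linarith⟩
      have := (hderiv _ hmem).comp s ((hasDerivAt_id s).const_add c)
      rw [mul_one] at this
      exact this
    have h1 := key (x + y) (by linarith) le_rfl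
    have h2 := key 0 le_rfl (by linarith)
    have h3 := key x hx (by linarith)
    have h4 := key y hy (by linarith)
    simp only [zero_add] at h2
    exact ((h1.add h2).sub h3).sub h4
  have hmono : MonotoneOn D (Set.Icc t (z + t)) := by
    apply monotoneOn_of_deriv_nonneg (convex_Icc _ _) hDcont
    · intro s hs
      rw [interior_Icc] at hs
      exact (hDderiv s hs).differentiableAt.differentiableWithinAt
    · intro s hs
      rw [interior_Icc] at hs
      rw [(hDderiv s hs).deriv]
      obtain ⟨hs1, hs2⟩ := hs
      have := conv2 hconv s x y hx hy ⟨by linarith, by linarith⟩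
        ⟨by linarith, by linarith⟩
      linarith
  have hDt : D t ≤ D (z + t) :=
    hmono ⟨le_rfl, by linarith⟩ ⟨by linarith, le_rfl⟩ (by linarith)
  simp only [hD] at hDt
  have e1 : x + y + (z + t) = x + y + z + t := by ring
  have e2 : x + (z + t) = z + x + t := by ring
  have e3 : y + (z + t) = y + z + t := by ring
  rw [e1, e2, e3] at hDt
  linarith
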